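/- Let k be a positive integer and let m ≤ n be integers with n − m + 1 = 4k+2. Then the set of consecutive integers [m,n] can be partitioned into 2k+1 pairs such that the set of pair sums is exactly the set of 2k+1 consecutive integers {m+n−k, m+n−k+1, ..., m+n+k}. -/

import Mathlib

/-- For `m ≤ n` with `n - m + 1 = 4k+2` (`k ≥ 1`), the set `[m,n]` can be partitioned into
`2k+1` pairs such that the set of pair sums is exactly `{m+n-k, ..., m+n+k}`. -/
theorem pair_sums_interval_4k_add_2_consecutive (k : ℕ) (hk : 0 < k)
    (m n : ℤ) (hmn : m ≤ n) (hcard : n - m + 1 = 4 * (k : ℤ) + 2) :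
    ∃ P : Finset (Finset ℤ),
      P.card = 2 * k + 1 ∧
      (∀ p ∈ P, p.card = 2) ∧
      (∀ p ∈ P, ∀ q ∈ P, p ≠ q → Disjoint p q) ∧
      P.biUnion id = Finset.Icc m n ∧
      P.image (fun p => p.sum id) = Finset.Icc (m + n - (k : ℤ)) (m + n + (k : ℤ)) := by
  set K : ℤ := (k : ℤ) with hK
  have hK1 : 1 ≤ K := by rw [hK]; exact_mod_cast hk
  have hn : n = m + 4 * K + 1 := by omega
  set e1 : ℤ → ℤ := fun j => if j ≤ K then 2 * j else 2 * j - 2 * K - 1 with he1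
  set e2 : ℤ → ℤ := fun j => if j ≤ K then 3 * K + 1 - j else 5 * K + 2 - j with he2
  set pr : ℤ → Finset ℤ := fun j => ({m + e1 j, m + e2 j} : Finset ℤ) with hpr
  have hne : ∀ j, 0 ≤ j → j ≤ 2 * K → m + e1 j ≠ m + e2 j := by
    intro j h0 h2
    simp only [he1, he2]
    split_ifs <;> omega
  have hmem : ∀ j x, x ∈ pr j ↔ x = m + e1 j ∨ x = m + e2 j := by
    intro j x; simp [hpr]
  have hdisj : ∀ j j', 0 ≤ j → j ≤ 2 * K → 0 ≤ j' → j' ≤ 2 * K → j ≠ j' →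
      Disjoint (pr j) (pr j') := by
    intro j j' h1 h2 h3 h4 hne'
    rw [Finset.disjoint_left]
    intro x hx hx'
    rw [hmem] at hx hx'
    have hd : e1 j = e1 j' ∨ e1 j = e2 j' ∨ e2 j = e1 j' ∨ e2 j = e2 j' := by
      rcases hx with h | h <;> rcases hx' with h' | h' <;> omega
    simp only [he1, he2] at hd
    split_ifs at hd <;> omega
  have hcard2 : ∀ j, 0 ≤ j → j ≤ 2 * K → (pr j).card = 2 := by
    intro j h0 h2
    rw [hpr]
    rw [Finset.card_insert_of_notMem (by simp [hne j h0 h2]), Finset.card_singleton]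
  have hsum : ∀ j, 0 ≤ j → j ≤ 2 * K → (pr j).sum id = 2 * m + 3 * K + 1 + j := by
    intro j h0 h2
    rw [hpr]
    rw [Finset.sum_pair (hne j h0 h2)]
    simp only [id_eq, he1, he2]
    split_ifs <;> ring
  have hinj : Set.InjOn pr (Finset.Icc (0:ℤ) (2 * K)) := by
    intro j hj j' hj' hpp
    simp only [Finset.coe_Icc, Set.mem_Icc] at hj hj'
    by_contra hne'
    have := hdisj j j' hj.1 hj.2 hj'.1 hj'.2 hne'
    rw [hpp, Finset.disjoint_self_iff_empty] at this
    have : m + e1 j' ∈ pr j' := by rw [hmem]; left; rfl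
    rw [‹pr j' = ∅›] at this
    exact absurd this (Finset.notMem_empty _)
  refine ⟨(Finset.Icc (0:ℤ) (2 * K)).image pr, ?_, ?_, ?_, ?_, ?_⟩
  · rw [Finset.card_image_of_injOn hinj, Int.card_Icc]
    omega
  · intro p hp
    rcases Finset.mem_image.mp hp with ⟨j, hj, rfl⟩
    rw [Finset.mem_Icc] at hj
    exact hcard2 j hj.1 hj.2
  · intro p hp q hq hpq
    rcases Finset.mem_image.mp hp with ⟨j, hj, rfl⟩
    rcases Finset.mem_image.mp hq with ⟨j', hj', rfl⟩
    rw [Finset.mem_Icc] at hj hj'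
    exact hdisj j j' hj.1 hj.2 hj'.1 hj'.2 (fun h => hpq (by rw [h]))
  · rw [Finset.image_biUnion]
    apply Finset.eq_of_subset_of_card_le
    · intro x hx
      rcases Finset.mem_biUnion.mp hx with ⟨j, hj, hxj⟩
      rw [Finset.mem_Icc] at hj
      rw [id_eq, hmem] at hxj
      rw [Finset.mem_Icc, hn]
      simp only [he1, he2] at hxj
      split_ifs at hxj <;> omega
    · rw [Finset.card_biUnion]
      · have : ∀ j ∈ Finset.Icc (0:ℤ) (2 * K), (id (pr j)).card = 2 := by
          intro j hj
          rw [Finset.mem_Icc] at hj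
          exact hcard2 j hj.1 hj.2
        rw [Finset.sum_congr rfl this, Finset.sum_const, smul_eq_mul, Int.card_Icc, hn, Int.card_Icc]
        omega
      · intro j hj j' hj' hne'
        rw [Finset.mem_coe, Finset.mem_Icc] at hj hj'
        simp only [id_eq]
        exact hdisj j j' hj.1 hj.2 hj'.1 hj'.2 hne'
  · rw [Finset.image_image]
    have : Finset.image ((fun p => p.sum id) ∘ pr) (Finset.Icc (0:ℤ) (2 * K)) =
        Finset.image (fun j => 2 * m + 3 * K + 1 + j) (Finset.Icc (0:ℤ) (2 * K)) := by
      apply Finset.image_congr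
      intro j hj
      rw [Finset.mem_coe, Finset.mem_Icc] at hj
      exact hsum j hj.1 hj.2
    rw [this]
    ext x
    simp only [Finset.mem_image, Finset.mem_Icc, hn]
    constructor
    · rintro ⟨j, hj, rfl⟩; omega
    · intro hx; exact ⟨x - (2 * m + 3 * K + 1), by omega, by omega⟩
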